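/- arXiv:2603.20272 — 2 statements merged into one kernel-verified Lean document; each statement's English description precedes it below -/
import Mathlib

section
/- Let H be a finite-dimensional ℂ-vector space with conjugate-linear involution σ, and let (I^{p,q}) be a bigrading of H satisfying the conjugation condition with respect to σ and such that dim_ℂ I^{p,q} = dim_ℂ I^{q,p} for all (p,q) ∈ ℤ². For (p,q) ∈ ℤ², let D^{p,q} ⊆ H* := Hom_ℂ(H, ℂ) be the subspace of linear functionals vanishing on I^{r,s} for every (r,s) ≠ (−p,−q), and let σ* : H* → H* be the conjugate-linear involution σ*(f) := conj ∘ f ∘ σ. Then (D^{p,q}) is a bigrading of H* and it satisfies the conjugation condition with respect to σ*. -/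
open scoped TensorProduct

noncomputable section

/-- A conjugate-linear involution of a complex vector space `H`: an additive map `σ`
with `σ (c • v) = (conj c) • σ v` and `σ ∘ σ = id`. -/
structure ConjInv (H : Type) [AddCommGroup H] [Module ℂ H] where
  toFun : H → H
  map_add' : ∀ x y : H, toFun (x + y) = toFun x + toFun y
  map_smul' : ∀ (c : ℂ) (x : H), toFun (c • x) = (starRingEnd ℂ) c • toFun x
  invol' : ∀ x : H, toFun (toFun x) = x

variable {H : Type} [AddCommGroup H] [Module ℂ H]

/-- A bigrading of a complex vector space `H`: a family `I^{p,q}` of `ℂ`-subspaces,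
only finitely many nonzero, with `H = ⊕_{p,q} I^{p,q}` (internal direct sum). -/
structure IsBigrading (I : ℤ × ℤ → Submodule ℂ H) : Prop where
  finite : {pq : ℤ × ℤ | I pq ≠ ⊥}.Finite
  internal : DirectSum.IsInternal I

/-- The subspace `⊕_{r<p, s<q} I^{r,s}`. -/
def lowerPieces (I : ℤ × ℤ → Submodule ℂ H) (p q : ℤ) : Submodule ℂ H :=
  ⨆ rs ∈ {rs : ℤ × ℤ | rs.1 < p ∧ rs.2 < q}, I rs

/-- The conjugation condition with respect to a conjugate-linear involution `σ`:
for all `(p,q)`, the images of `I^{p,q}` and of `σ(I^{q,p})` in the quotient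
`H / ⊕_{r<p,s<q} I^{r,s}` coincide. -/
def ConjCondition (σ : ConjInv H) (I : ℤ × ℤ → Submodule ℂ H) : Prop :=
  ∀ p q : ℤ,
    I (p, q) ⊔ lowerPieces I p q
      = Submodule.span ℂ (σ.toFun '' (I (q, p) : Set H)) ⊔ lowerPieces I p q

/-- The piece `D^{p,q}` of the dual: functionals vanishing on every `I^{r,s}` with
`(r,s) ≠ (-p,-q)`. -/
def dualPiece (I : ℤ × ℤ → Submodule ℂ H) (pq : ℤ × ℤ) :
    Submodule ℂ (Module.Dual ℂ H) where
  carrier := {f | ∀ rs : ℤ × ℤ, rs ≠ (-pq.1, -pq.2) → ∀ x ∈ I rs, f x = 0}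
  add_mem' := by
    intro f g hf hg rs hrs x hx
    simp [hf rs hrs x hx, hg rs hrs x hx]
  zero_mem' := by
    intro rs hrs x hx
    simp
  smul_mem' := by
    intro c f hf rs hrs x hx
    simp [hf rs hrs x hx]

/-- The conjugate-dual of a functional: `f ↦ conj ∘ f ∘ σ`. -/
def ConjInv.dualFun (σ : ConjInv H) (f : Module.Dual ℂ H) : Module.Dual ℂ H where
  toFun x := (starRingEnd ℂ) (f (σ.toFun x))
  map_add' x y := by simp only [σ.map_add', map_add]
  map_smul' c x := by
    simp only [σ.map_smul', map_smul, smul_eq_mul, map_mul, Complex.conj_conj,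
      RingHom.id_apply]

/-- The conjugate-linear involution `σ*` of the dual space induced by `σ`:
`σ* f := conj ∘ f ∘ σ`. -/
def ConjInv.dual (σ : ConjInv H) : ConjInv (Module.Dual ℂ H) where
  toFun := σ.dualFun
  map_add' f g := by
    ext x
    simp [ConjInv.dualFun]
  map_smul' c f := by
    ext x
    simp [ConjInv.dualFun, smul_eq_mul, map_mul, mul_comm]
  invol' f := by
    ext x
    simp [ConjInv.dualFun, σ.invol']

namespace ConjInv

theorem map_zero' (σ : ConjInv H) : σ.toFun 0 = 0 := by
  simpa using σ.map_smul' 0 0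

/-- image of a submodule under σ -/
def subMap (σ : ConjInv H) (U : Submodule ℂ H) : Submodule ℂ H where
  carrier := σ.toFun '' U
  add_mem' := by
    rintro a b ⟨x, hx, rfl⟩ ⟨y, hy, rfl⟩
    exact ⟨x + y, U.add_mem hx hy, σ.map_add' x y⟩
  zero_mem' := ⟨0, U.zero_mem, σ.map_zero'⟩
  smul_mem' := by
    rintro c a ⟨x, hx, rfl⟩
    refine ⟨(starRingEnd ℂ) c • x, U.smul_mem _ hx, ?_⟩
    rw [σ.map_smul']
    simp

theorem mem_subMap {σ : ConjInv H} {U : Submodule ℂ H} {x : H} :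
    x ∈ σ.subMap U ↔ ∃ y ∈ U, σ.toFun y = x := Iff.rfl

theorem subMap_subMap (σ : ConjInv H) (U : Submodule ℂ H) : σ.subMap (σ.subMap U) = U := by
  ext x
  constructor
  · rintro ⟨_, ⟨y, hy, rfl⟩, rfl⟩
    rw [σ.invol']
    exact hy
  · intro hx
    exact ⟨σ.toFun x, ⟨x, hx, rfl⟩, σ.invol' x⟩

theorem subMap_mono (σ : ConjInv H) {U V : Submodule ℂ H} (h : U ≤ V) :
    σ.subMap U ≤ σ.subMap V := by
  rintro _ ⟨x, hx, rfl⟩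
  exact ⟨x, h hx, rfl⟩

theorem span_image (σ : ConjInv H) (U : Submodule ℂ H) :
    Submodule.span ℂ (σ.toFun '' (U : Set H)) = σ.subMap U :=
  Submodule.span_eq (σ.subMap U)

theorem subMap_le_iff (σ : ConjInv H) {U V : Submodule ℂ H} :
    σ.subMap U ≤ V ↔ U ≤ σ.subMap V := by
  constructor
  · intro h x hx
    exact ⟨σ.toFun x, h ⟨x, hx, rfl⟩, σ.invol' x⟩
  · rintro h _ ⟨x, hx, rfl⟩
    obtain ⟨y, hy, hyx⟩ := h hx
    have : σ.toFun x = y := by rw [← hyx, σ.invol']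
    rwa [this]

theorem subMap_sup (σ : ConjInv H) (U V : Submodule ℂ H) :
    σ.subMap (U ⊔ V) = σ.subMap U ⊔ σ.subMap V := by
  refine le_antisymm ?_ (sup_le (σ.subMap_mono le_sup_left) (σ.subMap_mono le_sup_right))
  rw [subMap_le_iff]
  refine sup_le ?_ ?_
  · calc U = σ.subMap (σ.subMap U) := (σ.subMap_subMap U).symm
      _ ≤ σ.subMap (σ.subMap U ⊔ σ.subMap V) := σ.subMap_mono le_sup_left
  · calc V = σ.subMap (σ.subMap V) := (σ.subMap_subMap V).symm
      _ ≤ σ.subMap (σ.subMap U ⊔ σ.subMap V) := σ.subMap_mono le_sup_right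

theorem subMap_biSup (σ : ConjInv H) {ι : Type*} (s : Set ι) (f : ι → Submodule ℂ H) :
    σ.subMap (⨆ i ∈ s, f i) = ⨆ i ∈ s, σ.subMap (f i) := by
  refine le_antisymm ?_ (iSup₂_le fun i hi => σ.subMap_mono (le_iSup₂ (f := fun i _ => f i) i hi))
  rw [subMap_le_iff]
  refine iSup₂_le fun i hi => ?_
  calc f i = σ.subMap (σ.subMap (f i)) := (σ.subMap_subMap (f i)).symm
    _ ≤ σ.subMap (⨆ i ∈ s, σ.subMap (f i)) :=
        σ.subMap_mono (le_iSup₂ (f := fun i _ => σ.subMap (f i)) i hi)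

theorem finrank_le_finrank_subMap [FiniteDimensional ℂ H] (σ : ConjInv H) (U : Submodule ℂ H) :
    Module.finrank ℂ U ≤ Module.finrank ℂ (σ.subMap U) := by
  classical
  let b := Module.finBasis ℂ U
  let v : Fin (Module.finrank ℂ U) → σ.subMap U :=
    fun i => ⟨σ.toFun (b i), ⟨b i, (b i).2, rfl⟩⟩
  have hli : LinearIndependent ℂ v := by
    rw [Fintype.linearIndependent_iff]
    intro c hc i
    have h1 : ∑ j, c j • σ.toFun ((b j : H)) = 0 := by
      have := congrArg (Subtype.val) hc
      simpa [v] using this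
    have σhom : H →+ H := AddMonoidHom.mk' σ.toFun σ.map_add'
    have h3 : ∑ j, (starRingEnd ℂ) (c j) • ((b j : H)) = 0 := by
      have hs : ∀ j, (starRingEnd ℂ) (c j) • ((b j : H))
          = σ.toFun (c j • σ.toFun (b j : H)) := by
        intro j
        rw [σ.map_smul', σ.invol']
      calc ∑ j, (starRingEnd ℂ) (c j) • ((b j : H))
          = ∑ j, σ.toFun (c j • σ.toFun (b j : H)) := Finset.sum_congr rfl fun j _ => hs j
        _ = (AddMonoidHom.mk' σ.toFun σ.map_add') (∑ j, c j • σ.toFun (b j : H)) :=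
            (map_sum (AddMonoidHom.mk' σ.toFun σ.map_add') _ _).symm
        _ = 0 := by rw [h1]; exact σ.map_zero'
    have h4 : ∑ j, (starRingEnd ℂ) (c j) • b j = (0 : U) := by
      apply Subtype.ext
      push_cast
      simpa using h3
    have := Fintype.linearIndependent_iff.mp b.linearIndependent _ h4 i
    simpa using this
  simpa using hli.fintype_card_le_finrank

theorem finrank_subMap [FiniteDimensional ℂ H] (σ : ConjInv H) (U : Submodule ℂ H) :
    Module.finrank ℂ (σ.subMap U) = Module.finrank ℂ U := by
  refine le_antisymm ?_ (σ.finrank_le_finrank_subMap U)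
  have := σ.finrank_le_finrank_subMap (σ.subMap U)
  rwa [σ.subMap_subMap U] at this

end ConjInv

section Proj

variable (I : ℤ × ℤ → Submodule ℂ H)

/-- projection onto the piece `I rs` determined by an internal direct sum decomposition -/
def bigProj (hInt : DirectSum.IsInternal I) (rs : ℤ × ℤ) : H →ₗ[ℂ] H :=
  (I rs).subtype ∘ₗ (DirectSum.component ℂ (ℤ × ℤ) (fun pq => I pq) rs) ∘ₗ
    (LinearEquiv.ofBijective (DirectSum.coeLinearMap I) hInt).symm.toLinearMap

variable {I}

theorem bigProj_mem (hInt : DirectSum.IsInternal I) (rs : ℤ × ℤ) (x : H) :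
    bigProj I hInt rs x ∈ I rs :=
  ((LinearEquiv.ofBijective (DirectSum.coeLinearMap I) hInt).symm x rs).2

theorem bigProj_apply_of_mem (hInt : DirectSum.IsInternal I) {rs uv : ℤ × ℤ} {x : H}
    (hx : x ∈ I rs) : bigProj I hInt uv x = if uv = rs then x else 0 := by
  classical
  by_cases h : uv = rs
  · subst h
    simp only [if_pos rfl, bigProj, LinearMap.comp_apply]
    have := hInt.ofBijective_coeLinearMap_of_mem (i := uv) hx
    simp only [DirectSum.component, LinearMap.comp_apply]
    exact congrArg Subtype.val this
  · simp only [if_neg h, bigProj, LinearMap.comp_apply]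
    have := hInt.ofBijective_coeLinearMap_of_mem_ne (i := rs) (j := uv) (Ne.symm h) hx
    simp only [DirectSum.component, LinearMap.comp_apply]
    exact congrArg Subtype.val this

theorem sum_bigProj (hInt : DirectSum.IsInternal I) (hfin : {pq : ℤ × ℤ | I pq ≠ ⊥}.Finite)
    (x : H) : ∑ rs ∈ hfin.toFinset, bigProj I hInt rs x = x := by
  classical
  set e := LinearEquiv.ofBijective (DirectSum.coeLinearMap I) hInt with he
  have h2 : (DirectSum.coeLinearMap I) (e.symm x) = x := e.apply_symm_apply x
  rw [DirectSum.coeLinearMap_eq_dfinsuppSum, DFinsupp.sum] at h2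
  have hproj : ∀ rs, bigProj I hInt rs x = ((e.symm x) rs : H) := fun rs => rfl
  calc ∑ rs ∈ hfin.toFinset, bigProj I hInt rs x
      = ∑ rs ∈ hfin.toFinset, ((e.symm x) rs : H) :=
        Finset.sum_congr rfl fun rs _ => hproj rs
    _ = ∑ rs ∈ (e.symm x).support, ((e.symm x) rs : H) := by
        refine (Finset.sum_subset ?_ ?_).symm
        · intro rs hrs
          rw [DFinsupp.mem_support_iff] at hrs
          rw [Set.Finite.mem_toFinset]
          intro hbot
          apply hrs
          have h0 : ((e.symm x) rs : H) = 0 :=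
            (Submodule.eq_bot_iff _).mp hbot _ ((e.symm x) rs).2
          exact Subtype.ext h0
        · intro rs _ hrs
          rw [DFinsupp.notMem_support_iff] at hrs
          rw [hrs]
          rfl
    _ = x := h2

theorem dual_eq_zero_of_kills (hInt : DirectSum.IsInternal I)
    (hfin : {pq : ℤ × ℤ | I pq ≠ ⊥}.Finite) {f : Module.Dual ℂ H}
    (h : ∀ rs : ℤ × ℤ, ∀ x ∈ I rs, f x = 0) : f = 0 := by
  ext x
  rw [← sum_bigProj hInt hfin x, map_sum]
  simp only [LinearMap.zero_apply]
  exact Finset.sum_eq_zero fun rs _ => h rs _ (bigProj_mem hInt rs x)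

end Proj

theorem dual_decomp (hInt : DirectSum.IsInternal I)
    (hfin : {pq : ℤ × ℤ | I pq ≠ ⊥}.Finite) (f : Module.Dual ℂ H) :
    f = ∑ rs ∈ hfin.toFinset, f ∘ₗ bigProj I hInt rs := by
  ext x
  simp only [LinearMap.sum_apply, LinearMap.comp_apply]
  rw [← map_sum, sum_bigProj hInt hfin x]

theorem comp_bigProj_mem (hInt : DirectSum.IsInternal I) (rs : ℤ × ℤ)
    (f : Module.Dual ℂ H) :
    f ∘ₗ bigProj I hInt rs ∈ dualPiece I (-rs.1, -rs.2) := by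
  intro uv huv x hx
  rw [LinearMap.comp_apply, bigProj_apply_of_mem hInt hx, if_neg, map_zero]
  intro he
  subst he
  exact huv (by simp)

section Ann

variable {I : ℤ × ℤ → Submodule ℂ H}

theorem mem_dualPiece {pq : ℤ × ℤ} {f : Module.Dual ℂ H} :
    f ∈ dualPiece I pq ↔ ∀ rs : ℤ × ℤ, rs ≠ (-pq.1, -pq.2) → ∀ x ∈ I rs, f x = 0 :=
  Iff.rfl

theorem mem_dualAnnihilator_biSup {s : Set (ℤ × ℤ)} {J : ℤ × ℤ → Submodule ℂ H}
    {f : Module.Dual ℂ H} :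
    f ∈ Submodule.dualAnnihilator (⨆ rs ∈ s, J rs) ↔ ∀ rs ∈ s, ∀ x ∈ J rs, f x = 0 := by
  rw [Submodule.mem_dualAnnihilator]
  constructor
  · intro h rs hrs x hx
    exact h x (le_iSup₂ (f := fun rs _ => J rs) rs hrs hx)
  · intro h w hw
    have hker : (⨆ rs ∈ s, J rs) ≤ LinearMap.ker f :=
      iSup₂_le fun rs hrs x hx => LinearMap.mem_ker.mpr (h rs hrs x hx)
    exact LinearMap.mem_ker.mp (hker hw)

theorem dualPiece_eq_ann (pq : ℤ × ℤ) :
    dualPiece I pq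
      = Submodule.dualAnnihilator (⨆ rs ∈ {rs : ℤ × ℤ | rs ≠ (-pq.1, -pq.2)}, I rs) := by
  ext f
  rw [mem_dualPiece, mem_dualAnnihilator_biSup]
  exact Iff.rfl

theorem lowerPieces_dual_eq (hInt : DirectSum.IsInternal I)
    (hfin : {pq : ℤ × ℤ | I pq ≠ ⊥}.Finite) (p q : ℤ) :
    lowerPieces (dualPiece I) p q
      = Submodule.dualAnnihilator
          (⨆ rs ∈ {rs : ℤ × ℤ | ¬(-p < rs.1 ∧ -q < rs.2)}, I rs) := by
  refine le_antisymm ?_ ?_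
  · refine iSup₂_le fun rs hrs => ?_
    intro f hf
    rw [mem_dualAnnihilator_biSup]
    intro uv huv x hx
    refine mem_dualPiece.mp hf uv ?_ x hx
    intro heq
    exact huv ⟨heq ▸ neg_lt_neg hrs.1, heq ▸ neg_lt_neg hrs.2⟩
  · intro f hf
    rw [mem_dualAnnihilator_biSup] at hf
    rw [dual_decomp hInt hfin f]
    refine Submodule.sum_mem _ fun rs _ => ?_
    by_cases h : -p < rs.1 ∧ -q < rs.2
    · exact le_iSup₂ (f := fun rs _ => dualPiece I rs) (-rs.1, -rs.2)
        (Set.mem_setOf.mpr ⟨neg_lt.mp h.1, neg_lt.mp h.2⟩)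
        (comp_bigProj_mem hInt rs f)
    · have hz : f ∘ₗ bigProj I hInt rs = 0 := by
        ext x
        exact hf rs h _ (bigProj_mem hInt rs x)
      rw [hz]
      exact Submodule.zero_mem _

theorem sup_dual_eq (hInt : DirectSum.IsInternal I)
    (hfin : {pq : ℤ × ℤ | I pq ≠ ⊥}.Finite) (p q : ℤ) :
    dualPiece I (p, q) ⊔ lowerPieces (dualPiece I) p q
      = Submodule.dualAnnihilator
          (⨆ rs ∈ {rs : ℤ × ℤ | rs ≠ (-p, -q) ∧ ¬(-p < rs.1 ∧ -q < rs.2)}, I rs) := by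
  refine le_antisymm (sup_le ?_ ?_) ?_
  · intro f hf
    rw [mem_dualAnnihilator_biSup]
    intro uv huv x hx
    exact mem_dualPiece.mp hf uv huv.1 x hx
  · rw [lowerPieces_dual_eq hInt hfin p q]
    intro f hf
    rw [mem_dualAnnihilator_biSup] at hf ⊢
    exact fun rs hrs x hx => hf rs hrs.2 x hx
  · intro f hf
    rw [mem_dualAnnihilator_biSup] at hf
    rw [dual_decomp hInt hfin f]
    refine Submodule.sum_mem _ fun rs _ => ?_
    by_cases h1 : rs = (-p, -q)
    · refine Submodule.mem_sup_left ?_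
      have := comp_bigProj_mem hInt rs f
      rw [h1] at this ⊢
      simpa using this
    · by_cases h2 : -p < rs.1 ∧ -q < rs.2
      · refine Submodule.mem_sup_right ?_
        exact le_iSup₂ (f := fun rs _ => dualPiece I rs) (-rs.1, -rs.2)
          (Set.mem_setOf.mpr ⟨neg_lt.mp h2.1, neg_lt.mp h2.2⟩)
          (comp_bigProj_mem hInt rs f)
      · have hz : f ∘ₗ bigProj I hInt rs = 0 := by
          ext x
          exact hf rs ⟨h1, h2⟩ _ (bigProj_mem hInt rs x)
        rw [hz]
        exact Submodule.zero_mem _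

theorem span_dual_image_eq (σ : ConjInv H) (p q : ℤ) :
    Submodule.span ℂ (σ.dual.toFun '' (dualPiece I (q, p) : Set (Module.Dual ℂ H)))
      = Submodule.dualAnnihilator
          (⨆ cd ∈ {cd : ℤ × ℤ | cd ≠ (-q, -p)}, σ.subMap (I cd)) := by
  refine le_antisymm ?_ ?_
  · rw [Submodule.span_le]
    rintro _ ⟨f, hf, rfl⟩
    rw [SetLike.mem_coe, mem_dualAnnihilator_biSup]
    rintro cd hcd _ ⟨y, hy, rfl⟩
    show (starRingEnd ℂ) (f (σ.toFun (σ.toFun y))) = 0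
    rw [σ.invol', mem_dualPiece.mp hf cd (by simpa using hcd) y hy, map_zero]
  · intro g hg
    rw [mem_dualAnnihilator_biSup] at hg
    have hmem : σ.dual.toFun g ∈ dualPiece I (q, p) := by
      intro cd hcd x hx
      show (starRingEnd ℂ) (g (σ.toFun x)) = 0
      rw [hg cd (by simpa using hcd) (σ.toFun x) ⟨x, hx, rfl⟩, map_zero]
    refine Submodule.subset_span ⟨σ.dual.toFun g, hmem, ?_⟩
    exact σ.dual.invol' g

end Ann

section Master

variable {I : ℤ × ℤ → Submodule ℂ H}

theorem master_lemma (σ : ConjInv H) (hfin : {pq : ℤ × ℤ | I pq ≠ ⊥}.Finite)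
    (hconj : ConjCondition σ I) :
    ∀ a b : ℤ, I (a, b) ≤ σ.subMap (I (b, a) ⊔ lowerPieces I b a) := by
  classical
  suffices h : ∀ n : ℕ, ∀ a b : ℤ,
      (hfin.toFinset.filter (fun rs => rs.1 < a ∧ rs.2 < b)).card = n →
      I (a, b) ≤ σ.subMap (I (b, a) ⊔ lowerPieces I b a) from
    fun a b => h _ a b rfl
  intro n
  induction n using Nat.strong_induction_on with
  | _ n ih =>
    intro a b hn
    have hcc := hconj a b
    rw [σ.span_image] at hcc
    have h1 : I (a, b) ≤ σ.subMap (I (b, a)) ⊔ lowerPieces I a b :=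
      le_sup_left.trans (le_of_eq hcc)
    have h2 : lowerPieces I a b ≤ σ.subMap (I (b, a) ⊔ lowerPieces I b a) := by
      refine iSup₂_le fun rs hrs => ?_
      by_cases hbot : I rs = ⊥
      · rw [hbot]; exact bot_le
      · have hmem : rs ∈ hfin.toFinset.filter (fun cd => cd.1 < a ∧ cd.2 < b) := by
          rw [Finset.mem_filter, Set.Finite.mem_toFinset]
          exact ⟨hbot, hrs.1, hrs.2⟩
        have hcard : (hfin.toFinset.filter (fun cd => cd.1 < rs.1 ∧ cd.2 < rs.2)).card < n := by
          rw [← hn]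
          have hs : hfin.toFinset.filter (fun cd => cd.1 < rs.1 ∧ cd.2 < rs.2)
              ⊆ hfin.toFinset.filter (fun cd => cd.1 < a ∧ cd.2 < b) := by
            intro cd hcd
            rw [Finset.mem_filter] at hcd ⊢
            exact ⟨hcd.1, hcd.2.1.trans hrs.1, hcd.2.2.trans hrs.2⟩
          refine Finset.card_lt_card ((Finset.ssubset_iff_of_subset hs).mpr ⟨rs, hmem, ?_⟩)
          rw [Finset.mem_filter]
          rintro ⟨-, hlt, -⟩
          exact lt_irrefl _ hlt
        have hle := ih _ hcard rs.1 rs.2 rfl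
        refine le_trans hle (σ.subMap_mono (sup_le ?_ ?_))
        · refine le_trans ?_ le_sup_right
          exact le_iSup₂ (f := fun cd _ => I cd) (rs.2, rs.1)
            (Set.mem_setOf.mpr ⟨hrs.2, hrs.1⟩)
        · refine le_trans ?_ le_sup_right
          refine iSup₂_le fun cd hcd => ?_
          exact le_iSup₂ (f := fun cd _ => I cd) cd
            (Set.mem_setOf.mpr ⟨hcd.1.trans hrs.2, hcd.2.trans hrs.1⟩)
    refine h1.trans (sup_le (σ.subMap_mono le_sup_left) h2)

end Master

section Main

variable {I : ℤ × ℤ → Submodule ℂ H}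

theorem dual_isBigrading [FiniteDimensional ℂ H] (hI : IsBigrading I) :
    IsBigrading (dualPiece I) := by
  have hInt := hI.internal
  have hfin := hI.finite
  constructor
  · refine Set.Finite.subset (Set.Finite.image (fun rs => (-rs.1, -rs.2)) hfin) ?_
    intro pq hpq
    by_cases hbot : I (-pq.1, -pq.2) = ⊥
    · exfalso
      apply hpq
      rw [Submodule.eq_bot_iff]
      intro f hf
      refine dual_eq_zero_of_kills hInt hfin ?_
      intro rs x hx
      by_cases h : rs = (-pq.1, -pq.2)
      · subst h
        rw [hbot, Submodule.mem_bot] at hx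
        rw [hx, map_zero]
      · exact mem_dualPiece.mp hf rs h x hx
    · exact ⟨(-pq.1, -pq.2), hbot, by simp⟩
  · rw [DirectSum.isInternal_submodule_iff_iSupIndep_and_iSup_eq_top]
    constructor
    · intro pq
      rw [disjoint_iff_inf_le]
      intro f hf
      obtain ⟨hf1, hf2⟩ := Submodule.mem_inf.mp hf
      rw [Submodule.mem_bot]
      have hle : (⨆ uv, ⨆ (_ : uv ≠ pq), dualPiece I uv)
          ≤ Submodule.dualAnnihilator (I (-pq.1, -pq.2)) := by
        refine iSup₂_le fun uv huv g hg => ?_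
        rw [Submodule.mem_dualAnnihilator]
        intro x hx
        refine mem_dualPiece.mp hg (-pq.1, -pq.2) ?_ x hx
        intro he
        apply huv
        have h1 : uv.1 = pq.1 := by
          have := congrArg Prod.fst he
          simpa using this.symm
        have h2 : uv.2 = pq.2 := by
          have := congrArg Prod.snd he
          simpa using this.symm
        exact Prod.ext h1 h2
      have hkill := (Submodule.mem_dualAnnihilator _).mp (hle hf2)
      refine dual_eq_zero_of_kills hInt hfin ?_
      intro rs x hx
      by_cases h : rs = (-pq.1, -pq.2)
      · subst h
        exact hkill x hx
      · exact mem_dualPiece.mp hf1 rs h x hx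
    · rw [eq_top_iff]
      intro f _
      rw [dual_decomp hInt hfin f]
      refine Submodule.sum_mem _ fun rs _ => ?_
      exact le_iSup (fun pq => dualPiece I pq) (-rs.1, -rs.2) (comp_bigProj_mem hInt rs f)

theorem dual_conjCondition [FiniteDimensional ℂ H] (σ : ConjInv H)
    (hI : IsBigrading I) (hconj : ConjCondition σ I)
    (hsym : ∀ p q : ℤ, Module.finrank ℂ ↥(I (p, q)) = Module.finrank ℂ ↥(I (q, p))) :
    ConjCondition σ.dual (dualPiece I) := by
  have hInt := hI.internal
  have hfin := hI.finite
  obtain ⟨hind, htop⟩ :=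
    (DirectSum.isInternal_submodule_iff_iSupIndep_and_iSup_eq_top I).mp hInt
  intro p q
  set V' : Submodule ℂ H := ⨆ rs ∈ {rs : ℤ × ℤ | ¬(-p < rs.1 ∧ -q < rs.2)}, I rs with hV'
  set Vfull : Submodule ℂ H :=
    ⨆ rs ∈ {rs : ℤ × ℤ | rs ≠ (-p, -q) ∧ ¬(-p < rs.1 ∧ -q < rs.2)}, I rs with hVfull
  set V'' : Submodule ℂ H := ⨆ cd ∈ {cd : ℤ × ℤ | cd ≠ (-q, -p)}, I cd with hV''
  have hW : (⨆ cd ∈ {cd : ℤ × ℤ | cd ≠ (-q, -p)}, σ.subMap (I cd)) = σ.subMap V'' :=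
    (σ.subMap_biSup _ _).symm
  -- key inclusions
  have fact1 : Vfull ≤ σ.subMap V'' := by
    refine iSup₂_le fun rs hrs => ?_
    refine (master_lemma σ hfin hconj rs.1 rs.2).trans (σ.subMap_mono (sup_le ?_ ?_))
    · refine le_iSup₂ (f := fun cd _ => I cd) (rs.2, rs.1) ?_
      intro he
      refine hrs.1 (Prod.ext ?_ ?_)
      · simpa using congrArg Prod.snd he
      · simpa using congrArg Prod.fst he
    · refine iSup₂_le fun cd hcd => ?_
      refine le_iSup₂ (f := fun cd _ => I cd) cd ?_
      intro he
      refine hrs.2 ⟨?_, ?_⟩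
      · have : cd.2 = -p := congrArg Prod.snd he
        rw [← this]; exact hcd.2
      · have : cd.1 = -q := congrArg Prod.fst he
        rw [← this]; exact hcd.1
  have fact2 : Vfull ≤ V' := biSup_mono fun rs h => h.2
  have hCle : I (-p, -q) ≤ V' :=
    le_iSup₂ (f := fun rs _ => I rs) ((-p, -q) : ℤ × ℤ) (fun hh => lt_irrefl _ hh.1)
  have hLle : lowerPieces I (-p) (-q) ≤ V' := by
    refine iSup₂_le fun uv huv => ?_
    refine le_iSup₂ (f := fun rs _ => I rs) uv ?_
    intro hh
    exact absurd hh.1 (not_lt.mpr (le_of_lt huv.1))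
  have fact3 : σ.subMap V'' ⊔ V' = ⊤ := by
    rw [eq_top_iff, ← htop]
    refine iSup_le fun rs => ?_
    by_cases h : -p < rs.1 ∧ -q < rs.2
    · refine (master_lemma σ hfin hconj rs.1 rs.2).trans ?_
      rw [σ.subMap_sup]
      refine sup_le (le_trans (σ.subMap_mono ?_) le_sup_left) ?_
      · refine le_iSup₂ (f := fun cd _ => I cd) ((rs.2, rs.1) : ℤ × ℤ) ?_
        intro he
        have : rs.1 = -p := congrArg Prod.snd he
        rw [this] at h
        exact lt_irrefl _ h.1
      · rw [lowerPieces, σ.subMap_biSup]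
        refine iSup₂_le fun cd hcd => ?_
        by_cases hcd2 : cd = ((-q, -p) : ℤ × ℤ)
        · subst hcd2
          have hcc := hconj (-p) (-q)
          rw [σ.span_image] at hcc
          have h1 : σ.subMap (I (-q, -p)) ≤ I (-p, -q) ⊔ lowerPieces I (-p) (-q) :=
            le_sup_left.trans (le_of_eq hcc.symm)
          exact (h1.trans (sup_le hCle hLle)).trans le_sup_right
        · exact (σ.subMap_mono (le_iSup₂ (f := fun cd _ => I cd) cd hcd2)).trans le_sup_left
    · exact (le_iSup₂ (f := fun rs _ => I rs) rs h).trans le_sup_right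
  -- dimension bookkeeping
  have hdisj1 : Vfull ⊓ I (-p, -q) = ⊥ := by
    refine disjoint_iff.mp (Disjoint.symm (Disjoint.mono_right ?_ (hind ((-p, -q) : ℤ × ℤ))))
    exact biSup_mono fun rs h => h.1
  have hsplit1 : V' = Vfull ⊔ I (-p, -q) := by
    refine le_antisymm (iSup₂_le fun rs hrs => ?_) (sup_le fact2 hCle)
    by_cases h : rs = ((-p, -q) : ℤ × ℤ)
    · subst h; exact le_sup_right
    · exact (le_iSup₂ (f := fun rs _ => I rs) rs ⟨h, hrs⟩).trans le_sup_left
  have hdisj2 : V'' ⊓ I (-q, -p) = ⊥ := by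
    refine disjoint_iff.mp (Disjoint.symm (Disjoint.mono_right ?_ (hind ((-q, -p) : ℤ × ℤ))))
    exact biSup_mono fun rs h => h
  have hsplit2 : V'' ⊔ I (-q, -p) = ⊤ := by
    rw [eq_top_iff, ← htop]
    refine iSup_le fun rs => ?_
    by_cases h : rs = ((-q, -p) : ℤ × ℤ)
    · subst h; exact le_sup_right
    · exact (le_iSup₂ (f := fun rs _ => I rs) rs h).trans le_sup_left
  have hd1 := Submodule.finrank_sup_add_finrank_inf_eq Vfull (I (-p, -q))
  rw [hdisj1, finrank_bot, ← hsplit1] at hd1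
  have hd2 := Submodule.finrank_sup_add_finrank_inf_eq V'' (I (-q, -p))
  rw [hdisj2, finrank_bot, hsplit2] at hd2
  have hd3 := Submodule.finrank_sup_add_finrank_inf_eq (σ.subMap V'') V'
  rw [fact3, σ.finrank_subMap] at hd3
  have hd4 := hsym (-p) (-q)
  have hWV : Module.finrank ℂ ↥(σ.subMap V'' ⊓ V') = Module.finrank ℂ ↥Vfull := by omega
  have heq : Vfull = σ.subMap V'' ⊓ V' :=
    Submodule.eq_of_le_of_finrank_le (le_inf fact1 fact2) (le_of_eq hWV)
  -- assemble
  rw [sup_dual_eq hInt hfin p q, span_dual_image_eq σ p q, lowerPieces_dual_eq hInt hfin p q,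
    hW, ← Subspace.dualAnnihilator_inf_eq, ← heq]

end Main

/-- the dual family `(D^{p,q})` of a bigrading satisfying the conjugation
condition (with Hodge-symmetric dimensions) is a bigrading of the dual space satisfying
the conjugation condition with respect to the induced involution `σ*`. -/
theorem dualPiece_isBigrading_and_conjCondition
    (H : Type) [AddCommGroup H] [Module ℂ H] [FiniteDimensional ℂ H]
    (σ : ConjInv H) (I : ℤ × ℤ → Submodule ℂ H)
    (hI : IsBigrading I) (hconj : ConjCondition σ I)
    (hsym : ∀ p q : ℤ, Module.finrank ℂ ↥(I (p, q)) = Module.finrank ℂ ↥(I (q, p))) :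
    IsBigrading (dualPiece I) ∧ ConjCondition σ.dual (dualPiece I) := by
  exact ⟨dual_isBigrading hI, dual_conjCondition σ hI hconj hsym⟩
end
end

section
/- Let H₁ and H₂ be finite-dimensional ℂ-vector spaces with conjugate-linear involutions σ₁ and σ₂ respectively, and let (I₁^{p,q}) and (I₂^{p,q}) be bigradings of H₁ and H₂, each satisfying the conjugation condition with respect to σ₁, respectively σ₂. Let σ be the conjugate-linear involution of H₁ ⊗_ℂ H₂ characterized by σ(v ⊗ w) = σ₁(v) ⊗ σ₂(w) for all v ∈ H₁, w ∈ H₂ (together with additivity and σ(c·t) = (conj c)·σ(t)). For (p,q) ∈ ℤ² set T^{p,q} := Σ_{p₁+p₂=p, q₁+q₂=q} I₁^{p₁,q₁} ⊗ I₂^{p₂,q₂}, the ℂ-span in H₁ ⊗_ℂ H₂ of the elementary tensors v ⊗ w with v ∈ I₁^{p₁,q₁}, w ∈ I₂^{p₂,q₂}, p₁ + p₂ = p and q₁ + q₂ = q. Then (T^{p,q}) is a bigrading of H₁ ⊗_ℂ H₂ and it satisfies the conjugation condition with respect to σ. -/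
open scoped TensorProduct

noncomputable section

variable {H : Type} [AddCommGroup H] [Module ℂ H]

/-- The piece `T^{p,q} = Σ_{p₁+p₂=p, q₁+q₂=q} I₁^{p₁,q₁} ⊗ I₂^{p₂,q₂}` of the tensor
product: the `ℂ`-span of the elementary tensors `v ⊗ w` with `v ∈ I₁^{p₁,q₁}`,
`w ∈ I₂^{p₂,q₂}`, `p₁ + p₂ = p` and `q₁ + q₂ = q`. -/
def tensorPiece {H₁ H₂ : Type} [AddCommGroup H₁] [Module ℂ H₁]
    [AddCommGroup H₂] [Module ℂ H₂]
    (I₁ : ℤ × ℤ → Submodule ℂ H₁) (I₂ : ℤ × ℤ → Submodule ℂ H₂)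
    (pq : ℤ × ℤ) : Submodule ℂ (H₁ ⊗[ℂ] H₂) :=
  Submodule.span ℂ
    {t : H₁ ⊗[ℂ] H₂ | ∃ (p₁ q₁ p₂ q₂ : ℤ) (v : H₁) (w : H₂),
      v ∈ I₁ (p₁, q₁) ∧ w ∈ I₂ (p₂, q₂) ∧ p₁ + p₂ = pq.1 ∧ q₁ + q₂ = pq.2 ∧
      t = v ⊗ₜ[ℂ] w}

namespace BigAux

instance : RingHomSurjective (starRingEnd ℂ) := ⟨fun y => ⟨star y, by simp⟩⟩

/-- A `ConjInv` as a semilinear map. -/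
def csl (σ : ConjInv H) : H →ₛₗ[starRingEnd ℂ] H :=
  { toFun := σ.toFun, map_add' := σ.map_add', map_smul' := σ.map_smul' }

lemma span_image_eq_map (σ : ConjInv H) (A : Submodule ℂ H) :
    Submodule.span ℂ (σ.toFun '' (A : Set H)) = Submodule.map (csl σ) A := by
  conv_rhs => rw [← Submodule.span_eq A]
  rw [Submodule.map_span]
  rfl

/-- projection onto `I a` along an internal decomposition -/
def projAux {ι : Type} [DecidableEq ι] (I : ι → Submodule ℂ H)
    (h : DirectSum.IsInternal I) (a : ι) : H →ₗ[ℂ] H :=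
  (I a).subtype ∘ₗ (DirectSum.component ℂ ι (fun i => I i) a) ∘ₗ
    (LinearEquiv.ofBijective (DirectSum.coeLinearMap I) h).symm.toLinearMap

lemma projAux_of_mem {ι : Type} [DecidableEq ι] {I : ι → Submodule ℂ H}
    (h : DirectSum.IsInternal I) {a : ι} {x : H} (hx : x ∈ I a) :
    projAux I h a x = x := by
  have := h.ofBijective_coeLinearMap_of_mem hx
  simp only [projAux, LinearMap.coe_comp, Function.comp_apply, LinearEquiv.coe_coe,
    Submodule.coe_subtype, ← DirectSum.apply_eq_component]
  rw [this]

lemma projAux_of_mem_ne {ι : Type} [DecidableEq ι] {I : ι → Submodule ℂ H}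
    (h : DirectSum.IsInternal I) {a b : ι} (hab : b ≠ a) {x : H} (hx : x ∈ I b) :
    projAux I h a x = 0 := by
  have := h.ofBijective_coeLinearMap_of_mem_ne hab hx
  simp only [projAux, LinearMap.coe_comp, Function.comp_apply, LinearEquiv.coe_coe,
    Submodule.coe_subtype, ← DirectSum.apply_eq_component]
  rw [this]
  rfl

lemma conj_le (σ : ConjInv H) (I : ℤ × ℤ → Submodule ℂ H) (hc : ConjCondition σ I)
    (p q : ℤ) :
    I (p, q) ≤ Submodule.map (csl σ) (I (q, p)) ⊔ lowerPieces I p q := by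
  have h := hc p q
  rw [span_image_eq_map] at h
  exact le_trans le_sup_left h.le

lemma conj_ge (σ : ConjInv H) (I : ℤ × ℤ → Submodule ℂ H) (hc : ConjCondition σ I)
    (p q : ℤ) :
    Submodule.map (csl σ) (I (q, p)) ≤ I (p, q) ⊔ lowerPieces I p q := by
  have h := hc p q
  rw [span_image_eq_map] at h
  exact le_trans le_sup_left h.ge

section Two

variable {H₁ H₂ : Type} [AddCommGroup H₁] [Module ℂ H₁]
  [AddCommGroup H₂] [Module ℂ H₂]

open Submodule

/-- `tm A B` : span of elementary tensors. -/
def tm (A : Submodule ℂ H₁) (B : Submodule ℂ H₂) : Submodule ℂ (H₁ ⊗[ℂ] H₂) :=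
  Submodule.map₂ (TensorProduct.mk ℂ H₁ H₂) A B

lemma tm_def (A : Submodule ℂ H₁) (B : Submodule ℂ H₂) :
    tm A B = Submodule.map₂ (TensorProduct.mk ℂ H₁ H₂) A B := rfl

lemma tmul_mem_tm {A : Submodule ℂ H₁} {B : Submodule ℂ H₂} {v : H₁} {w : H₂}
    (hv : v ∈ A) (hw : w ∈ B) : v ⊗ₜ[ℂ] w ∈ tm A B :=
  Submodule.apply_mem_map₂ _ hv hw

lemma tm_mono {A A' : Submodule ℂ H₁} {B B' : Submodule ℂ H₂} (hA : A ≤ A') (hB : B ≤ B') :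
    tm A B ≤ tm A' B' := Submodule.map₂_le_map₂ hA hB

variable (I₁ : ℤ × ℤ → Submodule ℂ H₁) (I₂ : ℤ × ℤ → Submodule ℂ H₂)

lemma tensorPiece_eq (pq : ℤ × ℤ) :
    tensorPiece I₁ I₂ pq
      = ⨆ (ab : (ℤ × ℤ) × (ℤ × ℤ)) (_ : ab.1 + ab.2 = pq), tm (I₁ ab.1) (I₂ ab.2) := by
  apply le_antisymm
  · rw [tensorPiece, span_le]
    rintro t ⟨p₁, q₁, p₂, q₂, v, w, hv, hw, hp, hq, rfl⟩
    have hab : ((p₁, q₁), (p₂, q₂)).1 + ((p₁, q₁), (p₂, q₂)).2 = pq := by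
      simp [Prod.ext_iff, hp, hq]
    exact le_iSup₂ (f := fun (ab : (ℤ × ℤ) × (ℤ × ℤ)) _ => tm (I₁ ab.1) (I₂ ab.2))
      ((p₁, q₁), (p₂, q₂)) hab (tmul_mem_tm hv hw)
  · refine iSup₂_le fun ab hab => ?_
    rw [tm_def, map₂_eq_span_image2, tensorPiece]
    refine span_mono ?_
    rintro t ⟨v, hv, w, hw, rfl⟩
    exact ⟨ab.1.1, ab.1.2, ab.2.1, ab.2.2, v, w, by simpa using hv, by simpa using hw,
      by rw [← hab, Prod.fst_add], by rw [← hab, Prod.snd_add], rfl⟩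

lemma tm_le_tensorPiece {ab : (ℤ × ℤ) × (ℤ × ℤ)} {pq : ℤ × ℤ} (hab : ab.1 + ab.2 = pq) :
    tm (I₁ ab.1) (I₂ ab.2) ≤ tensorPiece I₁ I₂ pq := by
  rw [tensorPiece_eq]
  exact le_iSup₂ (f := fun (ab : (ℤ × ℤ) × (ℤ × ℤ)) _ => tm (I₁ ab.1) (I₂ ab.2)) ab hab

lemma tm_le_lower {a b : ℤ × ℤ} {p q : ℤ} (h1 : a.1 + b.1 < p) (h2 : a.2 + b.2 < q) :
    tm (I₁ a) (I₂ b) ≤ lowerPieces (tensorPiece I₁ I₂) p q :=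
  le_trans (tm_le_tensorPiece I₁ I₂ (ab := (a, b)) rfl)
    (le_iSup₂ (f := fun rs (_ : rs ∈ {rs : ℤ × ℤ | rs.1 < p ∧ rs.2 < q}) =>
      tensorPiece I₁ I₂ rs) (a + b) ⟨h1, h2⟩)

lemma tm_lower_right {a : ℤ × ℤ} {p q p₂ q₂ : ℤ} (h1 : a.1 + p₂ ≤ p) (h2 : a.2 + q₂ ≤ q) :
    tm (I₁ a) (lowerPieces I₂ p₂ q₂) ≤ lowerPieces (tensorPiece I₁ I₂) p q := by
  rw [tm_def, lowerPieces, map₂_iSup_right]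
  refine iSup_le fun rs => ?_
  rw [map₂_iSup_right]
  simp only [← tm_def]
  refine iSup_le fun hrs => ?_
  obtain ⟨hr1, hr2⟩ := hrs
  exact tm_le_lower I₁ I₂ (by omega : a.1 + rs.1 < p) (by omega : a.2 + rs.2 < q)

lemma tm_lower_left {b : ℤ × ℤ} {p q p₁ q₁ : ℤ} (h1 : p₁ + b.1 ≤ p) (h2 : q₁ + b.2 ≤ q) :
    tm (lowerPieces I₁ p₁ q₁) (I₂ b) ≤ lowerPieces (tensorPiece I₁ I₂) p q := by
  rw [tm_def, lowerPieces, map₂_iSup_left]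
  refine iSup_le fun rs => ?_
  rw [map₂_iSup_left]
  simp only [← tm_def]
  refine iSup_le fun hrs => ?_
  obtain ⟨hr1, hr2⟩ := hrs
  exact tm_le_lower I₁ I₂ (by omega : rs.1 + b.1 < p) (by omega : rs.2 + b.2 < q)

lemma tm_lower_lower {p q p₁ q₁ p₂ q₂ : ℤ} (h1 : p₁ + p₂ ≤ p) (h2 : q₁ + q₂ ≤ q) :
    tm (lowerPieces I₁ p₁ q₁) (lowerPieces I₂ p₂ q₂)
      ≤ lowerPieces (tensorPiece I₁ I₂) p q := by
  rw [tm_def, lowerPieces, map₂_iSup_left]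
  refine iSup_le fun rs => ?_
  rw [map₂_iSup_left]
  simp only [← tm_def]
  refine iSup_le fun hrs => ?_
  obtain ⟨hr1, hr2⟩ := hrs
  exact tm_lower_right I₁ I₂ (by omega : rs.1 + p₂ ≤ p) (by omega : rs.2 + q₂ ≤ q)

lemma tm_sup_sup (A A' : Submodule ℂ H₁) (B B' : Submodule ℂ H₂) :
    tm (A ⊔ A') (B ⊔ B') = (tm A B ⊔ tm A B') ⊔ (tm A' B ⊔ tm A' B') := by
  simp only [tm_def]
  rw [map₂_sup_left, map₂_sup_right, map₂_sup_right]

lemma csl_tm (σ₁ : ConjInv H₁) (σ₂ : ConjInv H₂) (σ : ConjInv (H₁ ⊗[ℂ] H₂))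
    (hσ : ∀ (v : H₁) (w : H₂), σ.toFun (v ⊗ₜ[ℂ] w) = σ₁.toFun v ⊗ₜ[ℂ] σ₂.toFun w)
    (A : Submodule ℂ H₁) (B : Submodule ℂ H₂) :
    Submodule.map (csl σ) (tm A B) = tm (Submodule.map (csl σ₁) A) (Submodule.map (csl σ₂) B) := by
  simp only [tm_def]
  rw [map₂_eq_span_image2, Submodule.map_span, map₂_eq_span_image2]
  congr 1
  rw [Set.image_image2, Submodule.map_coe, Submodule.map_coe,
    Set.image2_image_left, Set.image2_image_right]
  apply Set.image2_congr
  intro v hv w hw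
  exact hσ v w

lemma tm_sup_left (A A' : Submodule ℂ H₁) (B : Submodule ℂ H₂) :
    tm (A ⊔ A') B = tm A B ⊔ tm A' B := by
  simp only [tm_def]; rw [map₂_sup_left]

lemma tm_sup_right (A : Submodule ℂ H₁) (B B' : Submodule ℂ H₂) :
    tm A (B ⊔ B') = tm A B ⊔ tm A B' := by
  simp only [tm_def]; rw [map₂_sup_right]

lemma tm_conjsup_lower_right {p₁ q₁ p₂ q₂ p q : ℤ} (h1 : p₁ + p₂ ≤ p) (h2 : q₁ + q₂ ≤ q) :
    tm (I₁ (p₁, q₁) ⊔ lowerPieces I₁ p₁ q₁) (lowerPieces I₂ p₂ q₂)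
      ≤ lowerPieces (tensorPiece I₁ I₂) p q := by
  rw [tm_sup_left]
  exact sup_le (tm_lower_right I₁ I₂ (a := (p₁, q₁)) h1 h2) (tm_lower_lower I₁ I₂ h1 h2)

lemma tm_conjsup_lower_left {p₁ q₁ p₂ q₂ p q : ℤ} (h1 : p₁ + p₂ ≤ p) (h2 : q₁ + q₂ ≤ q) :
    tm (lowerPieces I₁ p₁ q₁) (I₂ (p₂, q₂) ⊔ lowerPieces I₂ p₂ q₂)
      ≤ lowerPieces (tensorPiece I₁ I₂) p q := by
  rw [tm_sup_right]
  exact sup_le (tm_lower_left I₁ I₂ (b := (p₂, q₂)) h1 h2) (tm_lower_lower I₁ I₂ h1 h2)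

variable {I₁ I₂}

/-- The projector onto `tensorPiece I₁ I₂ pq`. -/
def Qmap (h₁ : IsBigrading I₁) (h₂ : IsBigrading I₂) (pq : ℤ × ℤ) :
    H₁ ⊗[ℂ] H₂ →ₗ[ℂ] H₁ ⊗[ℂ] H₂ :=
  ∑ a ∈ h₁.finite.toFinset, ∑ b ∈ h₂.finite.toFinset,
    if a + b = pq then
      TensorProduct.map (projAux I₁ h₁.internal a) (projAux I₂ h₂.internal b)
    else 0

lemma Qmap_tmul (h₁ : IsBigrading I₁) (h₂ : IsBigrading I₂) (pq : ℤ × ℤ)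
    {c d : ℤ × ℤ} {v : H₁} {w : H₂} (hv : v ∈ I₁ c) (hw : w ∈ I₂ d) :
    Qmap h₁ h₂ pq (v ⊗ₜ[ℂ] w) = if c + d = pq then v ⊗ₜ[ℂ] w else 0 := by
  simp only [Qmap, LinearMap.coe_sum, Finset.sum_apply, apply_ite (α := _)
    (fun (g : H₁ ⊗[ℂ] H₂ →ₗ[ℂ] H₁ ⊗[ℂ] H₂) => g (v ⊗ₜ[ℂ] w)), LinearMap.zero_apply,
    TensorProduct.map_tmul]
  by_cases hc : c ∈ h₁.finite.toFinset
  · by_cases hd : d ∈ h₂.finite.toFinset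
    · rw [Finset.sum_eq_single_of_mem c hc]
      · rw [Finset.sum_eq_single_of_mem d hd]
        · rw [projAux_of_mem h₁.internal hv, projAux_of_mem h₂.internal hw]
        · intro b _ hbd
          rw [projAux_of_mem_ne h₂.internal (Ne.symm hbd) hw, TensorProduct.tmul_zero, ite_self]
      · intro a _ hac
        rw [Finset.sum_eq_zero]
        intro b _
        rw [projAux_of_mem_ne h₁.internal (Ne.symm hac) hv, TensorProduct.zero_tmul, ite_self]
    · have : I₂ d = ⊥ := by
        by_contra hbot
        exact hd (h₂.finite.mem_toFinset.mpr hbot)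
      rw [this, Submodule.mem_bot] at hw
      subst hw
      simp
  · have : I₁ c = ⊥ := by
      by_contra hbot
      exact hc (h₁.finite.mem_toFinset.mpr hbot)
    rw [this, Submodule.mem_bot] at hv
    subst hv
    simp

lemma Qmap_eq_self (h₁ : IsBigrading I₁) (h₂ : IsBigrading I₂) {pq : ℤ × ℤ}
    {x : H₁ ⊗[ℂ] H₂} (hx : x ∈ tensorPiece I₁ I₂ pq) :
    Qmap h₁ h₂ pq x = x := by
  refine Submodule.span_induction ?_ (by simp) (fun y z _ _ hy hz => by
    rw [map_add, hy, hz]) (fun c y _ hy => by rw [map_smul, hy]) hx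
  rintro t ⟨p₁, q₁, p₂, q₂, v, w, hv, hw, hp, hq, rfl⟩
  rw [Qmap_tmul h₁ h₂ pq hv hw, if_pos (by simp [Prod.ext_iff, hp, hq])]

lemma Qmap_eq_zero (h₁ : IsBigrading I₁) (h₂ : IsBigrading I₂) {pq pq' : ℤ × ℤ}
    (hne : pq' ≠ pq) {x : H₁ ⊗[ℂ] H₂} (hx : x ∈ tensorPiece I₁ I₂ pq') :
    Qmap h₁ h₂ pq x = 0 := by
  refine Submodule.span_induction ?_ (by simp) (fun y z _ _ hy hz => by
    rw [map_add, hy, hz, add_zero]) (fun c y _ hy => by rw [map_smul, hy, smul_zero]) hx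
  rintro t ⟨p₁, q₁, p₂, q₂, v, w, hv, hw, hp, hq, rfl⟩
  rw [Qmap_tmul h₁ h₂ pq hv hw, if_neg]
  intro hcontra
  apply hne
  rw [← hcontra]
  simp [Prod.ext_iff, hp, hq]

lemma tensorPiece_iSupIndep (h₁ : IsBigrading I₁) (h₂ : IsBigrading I₂) :
    iSupIndep (tensorPiece I₁ I₂) := by
  rw [iSupIndep_def]
  intro pq
  rw [Submodule.disjoint_def]
  intro x hx hx'
  have hker : (⨆ (j) (_ : j ≠ pq), tensorPiece I₁ I₂ j) ≤ LinearMap.ker (Qmap h₁ h₂ pq) := by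
    refine iSup_le fun j => iSup_le fun hj => fun y hy => ?_
    exact LinearMap.mem_ker.mpr (Qmap_eq_zero h₁ h₂ hj hy)
  have h0 : Qmap h₁ h₂ pq x = 0 := LinearMap.mem_ker.mp (hker hx')
  rw [← Qmap_eq_self h₁ h₂ hx, h0]

lemma tensorPiece_iSup_eq_top (h₁ : IsBigrading I₁) (h₂ : IsBigrading I₂) :
    ⨆ pq, tensorPiece I₁ I₂ pq = ⊤ := by
  have htop : tm (⊤ : Submodule ℂ H₁) (⊤ : Submodule ℂ H₂) = ⊤ := by
    rw [tm_def, ← TensorProduct.span_tmul_eq_top ℂ H₁ H₂, map₂_eq_span_image2]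
    congr 1
    ext t
    constructor
    · rintro ⟨v, -, w, -, rfl⟩
      exact ⟨v, w, rfl⟩
    · rintro ⟨v, w, rfl⟩
      exact ⟨v, trivial, w, trivial, rfl⟩
  rw [← top_le_iff, ← htop, ← h₁.internal.submodule_iSup_eq_top,
    ← h₂.internal.submodule_iSup_eq_top, tm_def, map₂_iSup_left]
  refine iSup_le fun a => ?_
  rw [map₂_iSup_right]
  refine iSup_le fun b => ?_
  rw [← tm_def]
  exact le_trans (tm_le_tensorPiece I₁ I₂ (ab := (a, b)) rfl) (le_iSup _ (a + b))

lemma tensorPiece_finite (h₁ : IsBigrading I₁) (h₂ : IsBigrading I₂) :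
    {pq : ℤ × ℤ | tensorPiece I₁ I₂ pq ≠ ⊥}.Finite := by
  refine Set.Finite.subset (Set.Finite.image2 (· + ·) h₁.finite h₂.finite) ?_
  intro pq hpq
  by_contra hmem
  apply hpq
  rw [tensorPiece_eq, eq_bot_iff]
  refine iSup₂_le fun ab hab => ?_
  by_cases ha : I₁ ab.1 = ⊥
  · rw [tm_def, ha, map₂_bot_left]
  · by_cases hb : I₂ ab.2 = ⊥
    · rw [tm_def, hb, map₂_bot_right]
    · exfalso
      apply hmem
      rw [← hab]
      exact Set.mem_image2_of_mem ha hb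


lemma tensorPiece_conj (σ₁ : ConjInv H₁) (σ₂ : ConjInv H₂)
    (hc₁ : ConjCondition σ₁ I₁) (hc₂ : ConjCondition σ₂ I₂)
    (σ : ConjInv (H₁ ⊗[ℂ] H₂))
    (hσ : ∀ (v : H₁) (w : H₂), σ.toFun (v ⊗ₜ[ℂ] w) = σ₁.toFun v ⊗ₜ[ℂ] σ₂.toFun w) :
    ConjCondition σ (tensorPiece I₁ I₂) := by
  intro p q
  rw [span_image_eq_map]
  apply le_antisymm
  · refine sup_le ?_ le_sup_right
    rw [tensorPiece_eq I₁ I₂ (p, q)]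
    refine iSup₂_le fun ab hab => ?_
    have hp : ab.1.1 + ab.2.1 = p := by simpa using congrArg Prod.fst hab
    have hq : ab.1.2 + ab.2.2 = q := by simpa using congrArg Prod.snd hab
    have step : tm (I₁ ab.1) (I₂ ab.2)
        ≤ tm (Submodule.map (csl σ₁) (I₁ (ab.1.2, ab.1.1)) ⊔ lowerPieces I₁ ab.1.1 ab.1.2)
             (Submodule.map (csl σ₂) (I₂ (ab.2.2, ab.2.1)) ⊔ lowerPieces I₂ ab.2.1 ab.2.2) := by
      refine tm_mono ?_ ?_
      · simpa using conj_le σ₁ I₁ hc₁ ab.1.1 ab.1.2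
      · simpa using conj_le σ₂ I₂ hc₂ ab.2.1 ab.2.2
    rw [tm_sup_sup] at step
    refine le_trans step ?_
    refine sup_le (sup_le ?_ ?_) (sup_le ?_ ?_)
    · rw [← csl_tm σ₁ σ₂ σ hσ]
      exact le_trans (Submodule.map_mono (tm_le_tensorPiece I₁ I₂
        (ab := ((ab.1.2, ab.1.1), (ab.2.2, ab.2.1))) (by simp [Prod.ext_iff, hp, hq])))
        le_sup_left
    · refine le_trans (le_trans (tm_mono (conj_ge σ₁ I₁ hc₁ ab.1.1 ab.1.2) le_rfl) ?_)
        le_sup_right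
      exact tm_conjsup_lower_right I₁ I₂ (le_of_eq hp) (le_of_eq hq)
    · refine le_trans (le_trans (tm_mono le_rfl (conj_ge σ₂ I₂ hc₂ ab.2.1 ab.2.2)) ?_)
        le_sup_right
      exact tm_conjsup_lower_left I₁ I₂ (le_of_eq hp) (le_of_eq hq)
    · exact le_trans (tm_lower_lower I₁ I₂ (le_of_eq hp) (le_of_eq hq)) le_sup_right
  · refine sup_le ?_ le_sup_right
    rw [tensorPiece_eq I₁ I₂ (q, p), Submodule.map_iSup]
    refine iSup_le fun ab => ?_
    rw [Submodule.map_iSup]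
    refine iSup_le fun hab => ?_
    have hq' : ab.1.1 + ab.2.1 = q := by simpa using congrArg Prod.fst hab
    have hp' : ab.1.2 + ab.2.2 = p := by simpa using congrArg Prod.snd hab
    rw [csl_tm σ₁ σ₂ σ hσ]
    have step : tm (Submodule.map (csl σ₁) (I₁ ab.1)) (Submodule.map (csl σ₂) (I₂ ab.2))
        ≤ tm (I₁ (ab.1.2, ab.1.1) ⊔ lowerPieces I₁ ab.1.2 ab.1.1)
             (I₂ (ab.2.2, ab.2.1) ⊔ lowerPieces I₂ ab.2.2 ab.2.1) := by
      refine tm_mono ?_ ?_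
      · simpa using conj_ge σ₁ I₁ hc₁ ab.1.2 ab.1.1
      · simpa using conj_ge σ₂ I₂ hc₂ ab.2.2 ab.2.1
    rw [tm_sup_sup] at step
    refine le_trans step ?_
    refine sup_le (sup_le ?_ ?_) (sup_le ?_ ?_)
    · exact le_trans (tm_le_tensorPiece I₁ I₂
        (ab := ((ab.1.2, ab.1.1), (ab.2.2, ab.2.1))) (by simp [Prod.ext_iff, hp', hq']))
        le_sup_left
    · exact le_trans (tm_lower_right I₁ I₂ (a := (ab.1.2, ab.1.1))
        (le_of_eq hp') (le_of_eq hq')) le_sup_right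
    · exact le_trans (tm_lower_left I₁ I₂ (b := (ab.2.2, ab.2.1))
        (le_of_eq hp') (le_of_eq hq')) le_sup_right
    · exact le_trans (tm_lower_lower I₁ I₂ (le_of_eq hp') (le_of_eq hq')) le_sup_right


end Two

end BigAux

/-- the tensor product of two bigradings satisfying the conjugation
condition is a bigrading of the tensor product satisfying the conjugation condition
with respect to the induced involution `σ = σ₁ ⊗ σ₂`. -/
theorem tensorPiece_isBigrading_and_conjCondition
    (H₁ H₂ : Type) [AddCommGroup H₁] [Module ℂ H₁] [FiniteDimensional ℂ H₁]
    [AddCommGroup H₂] [Module ℂ H₂] [FiniteDimensional ℂ H₂]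
    (σ₁ : ConjInv H₁) (σ₂ : ConjInv H₂)
    (I₁ : ℤ × ℤ → Submodule ℂ H₁) (I₂ : ℤ × ℤ → Submodule ℂ H₂)
    (h₁ : IsBigrading I₁) (hc₁ : ConjCondition σ₁ I₁)
    (h₂ : IsBigrading I₂) (hc₂ : ConjCondition σ₂ I₂)
    (σ : ConjInv (H₁ ⊗[ℂ] H₂))
    (hσ : ∀ (v : H₁) (w : H₂), σ.toFun (v ⊗ₜ[ℂ] w) = σ₁.toFun v ⊗ₜ[ℂ] σ₂.toFun w) :
    IsBigrading (tensorPiece I₁ I₂) ∧ ConjCondition σ (tensorPiece I₁ I₂) := by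
  refine ⟨⟨BigAux.tensorPiece_finite h₁ h₂, ?_⟩, BigAux.tensorPiece_conj σ₁ σ₂ hc₁ hc₂ σ hσ⟩
  exact DirectSum.isInternal_submodule_of_iSupIndep_of_iSup_eq_top
    (BigAux.tensorPiece_iSupIndep h₁ h₂) (BigAux.tensorPiece_iSup_eq_top h₁ h₂)
end
end
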